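/- Let X be a separable Banach space, Y a Banach space, G ⊂ X open, and f : G → Y a Borel measurable mapping whose restriction to every line meeting G is continuous. Let A be the set of all points x ∈ G at which f is not Lipschitz but for which there exists a second-category subset B_x of the unit sphere S_X such that limsup_{t→0+} ‖f(x+tv)−f(x)‖/t < ∞ for each v ∈ B_x. Then A is σ-directionally porous. -/

import Mathlib

open Filter Metric Set Topology MeasureTheory

set_option maxHeartbeats 2000000
set_option synthInstance.maxHeartbeats 400000

section CommonDefs
variable {X Y : Type*}

/-- `f` is (pointwise) Lipschitz at `x`:
`limsup_{y→x} ‖f y - f x‖/‖y - x‖ < ∞`. -/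
def LipschitzAtPt [NormedAddCommGroup X] [NormedAddCommGroup Y]
    (f : X → Y) (x : X) : Prop :=
  ∃ K > (0:ℝ), ∃ δ > (0:ℝ), ∀ y ∈ ball x δ, ‖f y - f x‖ ≤ K * ‖y - x‖

/-- The (two-sided) Hadamard directional derivative of `f` at `x` in direction `v` is `y`:
`(f (x + t z) - f x)/t → y` as `z → v`, `t → 0`, `t ≠ 0`. -/
def HadamardDerivAt [NormedAddCommGroup X] [NormedSpace ℝ X]
    [NormedAddCommGroup Y] [NormedSpace ℝ Y]
    (f : X → Y) (x v : X) (y : Y) : Prop :=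
  Tendsto (fun p : ℝ × X => p.1⁻¹ • (f (x + p.1 • p.2) - f x))
    ((𝓝[≠] (0:ℝ)) ×ˢ 𝓝 v) (𝓝 y)

/-- The one-sided Hadamard directional derivative of `f` at `x` in direction `v` is `y`:
`(f (x + t z) - f x)/t → y` as `z → v`, `t → 0+`. -/
def HadamardPlusDerivAt [NormedAddCommGroup X] [NormedSpace ℝ X]
    [NormedAddCommGroup Y] [NormedSpace ℝ Y]
    (f : X → Y) (x v : X) (y : Y) : Prop :=
  Tendsto (fun p : ℝ × X => p.1⁻¹ • (f (x + p.1 • p.2) - f x))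
    ((𝓝[>] (0:ℝ)) ×ˢ 𝓝 v) (𝓝 y)

/-- `f` is Gâteaux differentiable at `x` with derivative the continuous linear map `L`. -/
def GateauxDiffAt [NormedAddCommGroup X] [NormedSpace ℝ X]
    [NormedAddCommGroup Y] [NormedSpace ℝ Y]
    (f : X → Y) (x : X) (L : X →L[ℝ] Y) : Prop :=
  ∀ v : X, Tendsto (fun t : ℝ => t⁻¹ • (f (x + t • v) - f x)) (𝓝[≠] (0:ℝ)) (𝓝 (L v))

/-- `f` is Hadamard differentiable at `x` with derivative the continuous linear map `L`. -/
def HadamardDiffAt [NormedAddCommGroup X] [NormedSpace ℝ X]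
    [NormedAddCommGroup Y] [NormedSpace ℝ Y]
    (f : X → Y) (x : X) (L : X →L[ℝ] Y) : Prop :=
  ∀ v : X, HadamardDerivAt f x v (L v)

/-- `A` is directionally porous at `x`. -/
def DirPorousAt [NormedAddCommGroup X] [NormedSpace ℝ X] (A : Set X) (x : X) : Prop :=
  ∃ v : X, v ≠ 0 ∧ ∃ p > (0:ℝ), ∃ t : ℕ → ℝ, (∀ n, 0 < t n) ∧
    Tendsto t atTop (𝓝 (0:ℝ)) ∧ ∀ n, ball (x + t n • v) (p * t n) ∩ A = ∅

/-- `A` is a countable union of directionally porous sets. -/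
def SigmaDirPorous [NormedAddCommGroup X] [NormedSpace ℝ X] (A : Set X) : Prop :=
  ∃ S : ℕ → Set X, A = ⋃ n, S n ∧ ∀ n, ∀ x ∈ S n, DirPorousAt (S n) x

/-- `A` is porous at `x`. -/
def PorousAt [NormedAddCommGroup X] (A : Set X) (x : X) : Prop :=
  ∃ p > (0:ℝ), ∃ y : ℕ → X, (∀ n, y n ≠ x) ∧ Tendsto y atTop (𝓝 x) ∧
    ∀ n, ball (y n) (p * ‖y n - x‖) ∩ A = ∅

/-- `A` is a countable union of porous sets. -/
def SigmaPorous [NormedAddCommGroup X] (A : Set X) : Prop :=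
  ∃ S : ℕ → Set X, A = ⋃ n, S n ∧ ∀ n, ∀ x ∈ S n, PorousAt (S n) x

end CommonDefs

section TopAux
variable {Z : Type*} [TopologicalSpace Z]

lemma myIsOpen_inter_preimage {W : Type*} [TopologicalSpace W] {U : Set Z} (hU : IsOpen U)
    {f : Z → W} (hf : ∀ p ∈ U, ContinuousAt f p) {V : Set W} (hV : IsOpen V) :
    IsOpen (U ∩ f ⁻¹' V) := by
  rw [isOpen_iff_mem_nhds]
  rintro p ⟨hpU, hpV⟩
  filter_upwards [hU.mem_nhds hpU, (hf p hpU).preimage_mem_nhds (hV.mem_nhds hpV)] with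
    z h1 h2 using ⟨h1, h2⟩

lemma myNwd_iff {E : Set Z} : IsNowhereDense E ↔
    ∀ O : Set Z, IsOpen O → O.Nonempty → ∃ O', IsOpen O' ∧ O'.Nonempty ∧ O' ⊆ O ∧ O' ∩ E = ∅ := by
  constructor
  · intro h O hO hOne
    have : ¬ O ⊆ closure E := by
      intro hsub
      have : O ⊆ interior (closure E) := hO.subset_interior_iff.mpr hsub
      rw [h] at this
      exact hOne.ne_empty (subset_empty_iff.mp this)
    obtain ⟨p, hpO, hpE⟩ := not_subset.mp this
    refine ⟨O ∩ (closure E)ᶜ, hO.inter isClosed_closure.isOpen_compl, ⟨p, hpO, hpE⟩,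
      inter_subset_left, ?_⟩
    have : E ⊆ closure E := subset_closure
    ext z; simp only [mem_inter_iff, mem_compl_iff, mem_empty_iff_false, iff_false]
    rintro ⟨⟨-, hz⟩, hzE⟩; exact hz (this hzE)
  · intro h
    rw [IsNowhereDense]
    by_contra hne
    obtain ⟨p, hp⟩ := nonempty_iff_ne_empty.mpr hne
    obtain ⟨O', hO', hO'ne, hsub, hdisj⟩ := h _ isOpen_interior ⟨p, hp⟩
    have h1 : O' ⊆ closure E := hsub.trans interior_subset
    obtain ⟨z, hz⟩ := hO'ne
    obtain ⟨e, he, heE⟩ := mem_closure_iff.mp (h1 hz) O' hO' hz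
    exact absurd hdisj (nonempty_iff_ne_empty.mp ⟨e, he, heE⟩)

lemma myMeagre_iUnion {ι : Sort*} [Countable ι] {s : ι → Set Z} (h : ∀ i, IsMeagre (s i)) :
    IsMeagre (⋃ i, s i) := by
  rw [IsMeagre, compl_iUnion]
  exact (countable_iInter_mem).mpr h

/-- transfer of nowhere density through a partial homeomorphism given by maps φ, ψ
between open sets T, T'. -/
lemma nwd_transfer {T T' : Set Z} (hT : IsOpen T) (hT' : IsOpen T')
    {φ ψ : Z → Z} (hφ : ∀ p ∈ T, ContinuousAt φ p) (hψ : ∀ p ∈ T', ContinuousAt ψ p)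
    (hφT : MapsTo φ T T') (hψT : MapsTo ψ T' T)
    (hinv : ∀ p ∈ T, ψ (φ p) = p) (hinv' : ∀ p ∈ T', φ (ψ p) = p)
    {F : Set Z} (hF : IsNowhereDense F) : IsNowhereDense {p ∈ T | φ p ∈ F} := by
  rw [myNwd_iff]
  intro O hO hOne
  rcases (O ∩ T).eq_empty_or_nonempty with hOT | hOT
  · refine ⟨O, hO, hOne, subset_rfl, ?_⟩
    ext z; simp only [mem_inter_iff, mem_empty_iff_false, iff_false, mem_sep_iff]
    rintro ⟨hzO, hzT, -⟩
    exact absurd hOT (nonempty_iff_ne_empty.mp ⟨z, hzO, hzT⟩)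
  · -- W := φ '' (O ∩ T) is open
    have hWopen : IsOpen (T' ∩ ψ ⁻¹' (O ∩ T)) :=
      myIsOpen_inter_preimage hT' hψ (hO.inter hT)
    have hWeq : φ '' (O ∩ T) = T' ∩ ψ ⁻¹' (O ∩ T) := by
      apply Subset.antisymm
      · rintro y ⟨p, ⟨hpO, hpT⟩, rfl⟩
        refine ⟨hφT hpT, ?_⟩
        simp only [mem_preimage, hinv p hpT]
        exact ⟨hpO, hpT⟩
      · rintro y ⟨hyT', hy⟩
        exact ⟨ψ y, hy, hinv' y hyT'⟩
    have hWne : (φ '' (O ∩ T)).Nonempty := hOT.image φ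
    rw [hWeq] at hWne
    obtain ⟨W', hW', hW'ne, hW'sub, hW'disj⟩ := myNwd_iff.mp hF _ hWopen hWne
    refine ⟨(O ∩ T) ∩ φ ⁻¹' W', ?_, ?_, (inter_subset_left.trans inter_subset_left), ?_⟩
    · exact myIsOpen_inter_preimage (hO.inter hT) (fun p hp => hφ p hp.2) hW'
    · obtain ⟨y, hyW'⟩ := hW'ne
      have hyW : y ∈ T' ∩ ψ ⁻¹' (O ∩ T) := hW'sub hyW'
      refine ⟨ψ y, hyW.2, ?_⟩
      simp only [mem_preimage, hinv' y hyW.1]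
      exact hyW'
    · ext z
      simp only [mem_inter_iff, mem_preimage, mem_empty_iff_false, iff_false, mem_sep_iff]
      rintro ⟨⟨⟨-, -⟩, hzW'⟩, -, hzF⟩
      have : φ z ∈ W' ∩ F := ⟨hzW', hzF⟩
      rw [hW'disj] at this
      exact this

lemma meagre_transfer {T T' : Set Z} (hT : IsOpen T) (hT' : IsOpen T')
    {φ ψ : Z → Z} (hφ : ∀ p ∈ T, ContinuousAt φ p) (hψ : ∀ p ∈ T', ContinuousAt ψ p)
    (hφT : MapsTo φ T T') (hψT : MapsTo ψ T' T)
    (hinv : ∀ p ∈ T, ψ (φ p) = p) (hinv' : ∀ p ∈ T', φ (ψ p) = p)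
    {F : Set Z} (hF : IsMeagre F) : IsMeagre {p ∈ T | φ p ∈ F} := by
  obtain ⟨SS, hSnwd, hScnt, hScover⟩ := (isMeagre_iff_countable_union_isNowhereDense).mp hF
  have : {p ∈ T | φ p ∈ F} ⊆ ⋃ F' ∈ SS, {p ∈ T | φ p ∈ F'} := by
    rintro p ⟨hpT, hpF⟩
    obtain ⟨F', hF'S, hpF'⟩ := hScover hpF
    exact mem_biUnion hF'S ⟨hpT, hpF'⟩
  refine IsMeagre.mono this ?_
  have := hScnt.to_subtype
  rw [biUnion_eq_iUnion]
  apply myMeagre_iUnion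
  rintro ⟨F', hF'⟩
  obtain ⟨F'', h1, h2, h3⟩ := (hSnwd F' hF').subset_of_closed_isNowhereDense
  have : {p ∈ T | φ p ∈ F'} ⊆ {p ∈ T | φ p ∈ F''} := fun p hp => ⟨hp.1, h1 hp.2⟩
  refine IsMeagre.mono this ?_
  have hnwd := nwd_transfer hT hT' hφ hψ hφT hψT hinv hinv' h2
  -- nwd => meagre
  rw [isMeagre_iff_countable_union_isNowhereDense]
  exact ⟨{{p ∈ T | φ p ∈ F''}}, by simpa using hnwd, countable_singleton _, by simp⟩

lemma meagre_prod_left {W : Type*} [TopologicalSpace W] {M : Set Z} (h : IsMeagre M)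
    (I : Set W) : IsMeagre (M ×ˢ I) := by
  obtain ⟨SS, hSnwd, hScnt, hScover⟩ := isMeagre_iff_countable_union_isNowhereDense.mp h
  rw [isMeagre_iff_countable_union_isNowhereDense]
  refine ⟨(fun F => F ×ˢ (univ : Set W)) '' SS, ?_, hScnt.image _, ?_⟩
  · rintro t ⟨F, hFS, rfl⟩
    have h := hSnwd F hFS
    rw [IsNowhereDense] at h ⊢
    rw [closure_prod_eq, interior_prod_eq, h, closure_univ]
    simp
  · rintro ⟨v, s⟩ ⟨hv, hs⟩
    obtain ⟨F, hFS, hvF⟩ := hScover hv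
    exact mem_sUnion.mpr ⟨F ×ˢ univ, mem_image_of_mem _ hFS, ⟨hvF, mem_univ _⟩⟩

lemma nonmeager_univ [Nonempty Z] [BaireSpace Z] : ¬ IsMeagre (univ : Set Z) := by
  intro h
  rw [IsMeagre, compl_univ] at h
  have := dense_of_mem_residual h
  simpa using this.nonempty

lemma nonmeager_loc {E : Set Z} (hE : BaireMeasurableSet E) (h : ¬ IsMeagre E) :
    ∃ U : Set Z, IsOpen U ∧ U.Nonempty ∧ IsMeagre (U \ E) := by
  obtain ⟨U, hU, hEU⟩ := hE.residualEq_isOpen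
  have hsym : IsMeagre {z | ¬ (z ∈ E ↔ z ∈ U)} := by
    rw [IsMeagre]
    have h2 : {z | ¬ (z ∈ E ↔ z ∈ U)}ᶜ = {z | z ∈ E ↔ z ∈ U} := by ext z; simp
    rw [h2]
    filter_upwards [hEU] with z hz
    simp only [eq_iff_iff] at hz
    exact hz
  refine ⟨U, hU, ?_, ?_⟩
  · rcases U.eq_empty_or_nonempty with hUe | hUe
    · exfalso
      apply h
      refine IsMeagre.mono ?_ hsym
      intro z hz
      simp only [mem_setOf_eq, hUe, mem_empty_iff_false, iff_false, not_not]
      exact hz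
    · exact hUe
  · refine IsMeagre.mono ?_ hsym
    rintro z ⟨hzU, hzE⟩
    simp only [mem_setOf_eq]
    intro hiff
    exact hzE (hiff.mpr hzU)
end TopAux

section SphereAux
variable {X : Type*} [NormedAddCommGroup X] [NormedSpace ℝ X]

local notation "S" => sphere (0:X) 1

open scoped Classical in
noncomputable def phiF (c₀ : X) (p : ↥S × ℝ) : ↥S × ℝ :=
  (if h : p.2 • (p.1:X) - c₀ = 0 then p.1
    else ⟨‖p.2 • (p.1:X) - c₀‖⁻¹ • (p.2 • (p.1:X) - c₀), by
      rw [mem_sphere_zero_iff_norm, norm_smul, norm_inv, norm_norm]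
      exact inv_mul_cancel₀ (norm_ne_zero_iff.mpr h)⟩,
   ‖p.2 • (p.1:X) - c₀‖)

def TT (c₀ : X) : Set (↥S × ℝ) := {p | 0 < p.2 ∧ p.2 • (p.1:X) - c₀ ≠ 0}

lemma gcont (c₀ : X) : Continuous (fun p : ↥S × ℝ => p.2 • (p.1:X) - c₀) := by
  exact (continuous_snd.smul (continuous_subtype_val.comp continuous_fst)).sub continuous_const

lemma ne_open (c₀ : X) : IsOpen {p : ↥S × ℝ | p.2 • (p.1:X) - c₀ ≠ 0} := by
  have h : IsClosed {p : ↥S × ℝ | p.2 • (p.1:X) - c₀ = 0} :=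
    isClosed_eq (gcont c₀) continuous_const
  exact h.isOpen_compl

lemma TT_open (c₀ : X) : IsOpen (TT c₀) := by
  have h1 : IsOpen {p : ↥S × ℝ | 0 < p.2} := isOpen_lt continuous_const continuous_snd
  exact h1.inter (ne_open c₀)

lemma phiF_val {c₀ : X} {p : ↥S × ℝ} (h : p.2 • (p.1:X) - c₀ ≠ 0) :
    ((phiF c₀ p).2 : ℝ) • ((phiF c₀ p).1 : X) = p.2 • (p.1:X) - c₀ := by
  simp only [phiF, dif_neg h]
  show ‖p.2 • (p.1:X) - c₀‖ • (‖p.2 • (p.1:X) - c₀‖⁻¹ • (p.2 • (p.1:X) - c₀)) = _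
  rw [smul_smul, mul_inv_cancel₀ (norm_ne_zero_iff.mpr h), one_smul]

lemma phiF_fst_val {c₀ : X} {p : ↥S × ℝ} (h : p.2 • (p.1:X) - c₀ ≠ 0) :
    ((phiF c₀ p).1 : X) = ‖p.2 • (p.1:X) - c₀‖⁻¹ • (p.2 • (p.1:X) - c₀) := by
  simp only [phiF, dif_neg h]

lemma phiF_snd_val (c₀ : X) (p : ↥S × ℝ) : (phiF c₀ p).2 = ‖p.2 • (p.1:X) - c₀‖ := rfl

lemma phiF_snd_pos {c₀ : X} {p : ↥S × ℝ} (h : p.2 • (p.1:X) - c₀ ≠ 0) :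
    0 < (phiF c₀ p).2 := by
  simp only [phiF]
  exact norm_pos_iff.mpr h

lemma smul_unit_ne_zero {v : ↥S} {s : ℝ} (hs : 0 < s) : s • (v:X) ≠ 0 := by
  intro h
  have := congrArg norm h
  rw [norm_smul, norm_eq_of_mem_sphere v, mul_one, norm_zero] at this
  simp only [Real.norm_eq_abs] at this
  rw [abs_of_pos hs] at this
  exact hs.ne' this

lemma phiF_mapsTo (c₀ : X) : MapsTo (phiF c₀) (TT c₀) (TT (-c₀)) := by
  rintro p ⟨hp2, hpne⟩
  constructor
  · exact phiF_snd_pos hpne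
  · rw [phiF_val hpne, sub_neg_eq_add, sub_add_cancel]
    exact smul_unit_ne_zero hp2

lemma phiF_inv (c₀ : X) : ∀ p ∈ TT c₀, phiF (-c₀) (phiF c₀ p) = p := by
  rintro p ⟨hp2, hpne⟩
  have hval : (phiF c₀ p).2 • ((phiF c₀ p).1 : X) - (-c₀) = p.2 • (p.1:X) := by
    rw [phiF_val hpne]; abel
  have hne : (phiF c₀ p).2 • ((phiF c₀ p).1 : X) - (-c₀) ≠ 0 := by
    rw [hval]; exact smul_unit_ne_zero hp2
  have hnorm : ‖(phiF c₀ p).2 • ((phiF c₀ p).1 : X) - (-c₀)‖ = p.2 := by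
    rw [hval, norm_smul, norm_eq_of_mem_sphere p.1, mul_one, Real.norm_eq_abs, abs_of_pos hp2]
  have h1 : ((phiF (-c₀) (phiF c₀ p)).1 : X) = (p.1 : X) := by
    rw [phiF_fst_val hne, hval, norm_smul, norm_eq_of_mem_sphere p.1, mul_one,
      Real.norm_eq_abs, abs_of_pos hp2, smul_smul, inv_mul_cancel₀ hp2.ne', one_smul]
  have h2 : (phiF (-c₀) (phiF c₀ p)).2 = p.2 := by
    rw [phiF_snd_val, hnorm]
  exact Prod.ext (Subtype.ext h1) h2

lemma phiF_continuousAt (c₀ : X) {p₀ : ↥S × ℝ} (hp₀ : p₀ ∈ TT c₀) :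
    ContinuousAt (phiF c₀) p₀ := by
  have hne : p₀.2 • (p₀.1:X) - c₀ ≠ 0 := hp₀.2
  have hev : ∀ᶠ p in 𝓝 p₀, p.2 • (p.1:X) - c₀ ≠ 0 := (ne_open c₀).mem_nhds hne
  apply ContinuousAt.prodMk
  · -- first component, into subtype
    rw [Topology.IsInducing.subtypeVal.continuousAt_iff]
    have hcong : (Subtype.val ∘ fun p => (phiF c₀ p).1) =ᶠ[𝓝 p₀]
        fun p => ‖p.2 • (p.1:X) - c₀‖⁻¹ • (p.2 • (p.1:X) - c₀) := by
      filter_upwards [hev] with p hp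
      simp only [Function.comp_apply, phiF, dif_neg hp]
    apply ContinuousAt.congr ?_ hcong.symm
    exact (((gcont c₀).norm.continuousAt).inv₀ (norm_ne_zero_iff.mpr hne)).smul
      (gcont c₀).continuousAt
  · exact ((gcont c₀).norm).continuousAt
end SphereAux

section CoreLemma
variable {X : Type*} [NormedAddCommGroup X] [NormedSpace ℝ X] [CompleteSpace X]

local notation "S" => sphere (0:X) 1

lemma core_meeting (c₀ : X) {D₁ D₂ C₁ C₂ : Set ↥S} (hC₁ : IsOpen C₁) (hC₂ : IsOpen C₂)
    (h₁ : IsMeagre (C₁ \ D₁)) (h₂ : IsMeagre (C₂ \ D₂)) {β₁ β₂ : ℝ}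
    (v₀ : ↥S) (s₀ : ℝ) (hv₀ : v₀ ∈ C₁) (hs₀ : s₀ ∈ Ioo (0:ℝ) β₁)
    (e₀ : ↥S) (μ₀ : ℝ) (he₀ : e₀ ∈ C₂) (hμ₀ : μ₀ ∈ Ioo (0:ℝ) β₂)
    (heq₀ : s₀ • (v₀:X) - c₀ = μ₀ • (e₀:X)) :
    ∃ v ∈ D₁, ∃ s ∈ Ioo (0:ℝ) β₁, ∃ e ∈ D₂, ∃ μ ∈ Ioo (0:ℝ) β₂,
      s • (v:X) - c₀ = μ • (e:X) := by
  haveI : CompleteSpace ↥S := (isClosed_sphere).completeSpace_coe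
  haveI : BaireSpace (↥S × ℝ) := by infer_instance
  set φ := phiF c₀ with hφdef
  set ψ := phiF (-c₀) with hψdef
  have hTT' : TT (-(-c₀)) = TT c₀ := by rw [neg_neg]
  have hφc : ∀ p ∈ TT c₀, ContinuousAt φ p := fun p hp => phiF_continuousAt c₀ hp
  have hψc : ∀ p ∈ TT (-c₀), ContinuousAt ψ p := fun p hp => phiF_continuousAt (-c₀) hp
  have hφm : MapsTo φ (TT c₀) (TT (-c₀)) := phiF_mapsTo c₀
  have hψm : MapsTo ψ (TT (-c₀)) (TT c₀) := by
    have := phiF_mapsTo (-c₀); rwa [hTT'] at this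
  have hinv : ∀ p ∈ TT c₀, ψ (φ p) = p := phiF_inv c₀
  have hinv' : ∀ p ∈ TT (-c₀), φ (ψ p) = p := by
    intro p hp
    have := phiF_inv (-c₀) p hp
    rwa [neg_neg] at this
  -- the open set where we search
  have hO1 : IsOpen ((C₁ ×ˢ Ioo (0:ℝ) β₁) ∩ TT c₀) :=
    (hC₁.prod isOpen_Ioo).inter (TT_open c₀)
  have hO : IsOpen (((C₁ ×ˢ Ioo (0:ℝ) β₁) ∩ TT c₀) ∩ φ ⁻¹' (C₂ ×ˢ Ioo (0:ℝ) β₂)) := by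
    apply myIsOpen_inter_preimage hO1 (fun p hp => hφc p hp.2) (hC₂.prod isOpen_Ioo)
  -- p₀ is in it
  have hp₀T : ((v₀, s₀) : ↥S × ℝ) ∈ TT c₀ := by
    refine ⟨hs₀.1, ?_⟩
    rw [heq₀]
    exact smul_unit_ne_zero hμ₀.1
  have hφp₀ : φ ((v₀, s₀) : ↥S × ℝ) = (e₀, μ₀) := by
    have hne : (s₀ • (v₀:X) - c₀) ≠ 0 := by rw [heq₀]; exact smul_unit_ne_zero hμ₀.1
    have h1 : ((φ ((v₀, s₀) : ↥S × ℝ)).1 : X) = (e₀ : X) := by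
      rw [hφdef, phiF_fst_val hne]
      show ‖(s₀ • (v₀:X) - c₀)‖⁻¹ • (s₀ • (v₀:X) - c₀) = _
      rw [heq₀, norm_smul, norm_eq_of_mem_sphere e₀, mul_one, Real.norm_eq_abs,
        abs_of_pos hμ₀.1, smul_smul, inv_mul_cancel₀ hμ₀.1.ne', one_smul]
    have h2 : (φ ((v₀, s₀) : ↥S × ℝ)).2 = μ₀ := by
      rw [hφdef, phiF_snd_val]
      show ‖(s₀ • (v₀:X) - c₀)‖ = _
      rw [heq₀, norm_smul, norm_eq_of_mem_sphere e₀, mul_one, Real.norm_eq_abs,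
        abs_of_pos hμ₀.1]
    exact Prod.ext (Subtype.ext h1) h2
  have hp₀ : ((v₀, s₀) : ↥S × ℝ) ∈ ((C₁ ×ˢ Ioo (0:ℝ) β₁) ∩ TT c₀) ∩ φ ⁻¹' (C₂ ×ˢ Ioo (0:ℝ) β₂) := by
    refine ⟨⟨⟨hv₀, hs₀⟩, hp₀T⟩, ?_⟩
    simp only [mem_preimage, hφp₀]
    exact ⟨he₀, hμ₀⟩
  -- the bad set
  have hbadA : IsMeagre ((C₁ \ D₁) ×ˢ (Ioo (0:ℝ) β₁)) := meagre_prod_left h₁ _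
  have hbadB : IsMeagre {p ∈ TT c₀ | φ p ∈ (C₂ \ D₂) ×ˢ (Ioo (0:ℝ) β₂)} :=
    meagre_transfer (TT_open c₀) (TT_open (-c₀)) hφc hψc hφm hψm hinv hinv'
      (meagre_prod_left h₂ _)
  have hbad : IsMeagre (((C₁ \ D₁) ×ˢ (Ioo (0:ℝ) β₁)) ∪
      {p ∈ TT c₀ | φ p ∈ (C₂ \ D₂) ×ˢ (Ioo (0:ℝ) β₂)}) := by
    rw [IsMeagre, compl_union]
    exact Filter.inter_mem hbadA hbadB
  -- Baire
  have hdense := dense_of_mem_residual hbad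
  obtain ⟨p, hpbadc, hpO⟩ := hdense.exists_mem_open hO ⟨_, hp₀⟩
  obtain ⟨⟨⟨hpC₁, hpI₁⟩, hpT⟩, hpφ⟩ := hpO
  rw [mem_preimage] at hpφ
  obtain ⟨hφC₂, hφI₂⟩ := hpφ
  have hnb1 : p ∉ (C₁ \ D₁) ×ˢ (Ioo (0:ℝ) β₁) := fun h => hpbadc (Or.inl h)
  have hnb2 : p ∉ {p ∈ TT c₀ | φ p ∈ (C₂ \ D₂) ×ˢ (Ioo (0:ℝ) β₂)} := fun h => hpbadc (Or.inr h)
  have hv : p.1 ∈ D₁ := by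
    by_contra hvD
    exact hnb1 (Set.mem_prod.mpr ⟨⟨hpC₁, hvD⟩, hpI₁⟩)
  have he : (φ p).1 ∈ D₂ := by
    by_contra heD
    exact hnb2 ⟨hpT, Set.mem_prod.mpr ⟨⟨hφC₂, heD⟩, hφI₂⟩⟩
  refine ⟨p.1, hv, p.2, hpI₁, (φ p).1, he, (φ p).2, hφI₂, ?_⟩
  exact (phiF_val hpT.2).symm
end CoreLemma

section Analytic
variable {X Y : Type*} [NormedAddCommGroup X] [NormedSpace ℝ X] [CompleteSpace X]
  [MeasurableSpace X] [BorelSpace X]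
  [NormedAddCommGroup Y] [NormedSpace ℝ Y]
  [MeasurableSpace Y] [BorelSpace Y]

local notation "S" => sphere (0:X) 1

lemma dir_est {y w : X} (hw : ‖w‖ = 1) {τ a : ℝ} (ha : ‖y - τ • w‖ ≤ a) (haτ : a < τ) :
    y ≠ 0 ∧ τ - a ≤ ‖y‖ ∧ ‖y‖ ≤ τ + a ∧ ‖‖y‖⁻¹ • y - w‖ ≤ 2*a/(τ - a) := by
  have ha0 : 0 ≤ a := le_trans (norm_nonneg _) ha
  have hτ0 : 0 < τ := lt_of_le_of_lt ha0 haτ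
  have hτw : ‖τ • w‖ = τ := by
    rw [norm_smul, hw, mul_one, Real.norm_eq_abs, abs_of_pos hτ0]
  have hlow : τ - a ≤ ‖y‖ := by
    have := norm_sub_norm_le (τ • w) y
    rw [hτw] at this
    have h2 : ‖τ • w - y‖ ≤ a := by rwa [norm_sub_rev] at ha
    linarith
  have hupp : ‖y‖ ≤ τ + a := by
    have hyd : τ • w + (y - τ • w) = y := by abel
    calc ‖y‖ = ‖τ • w + (y - τ • w)‖ := by rw [hyd]
      _ ≤ ‖τ • w‖ + ‖y - τ • w‖ := norm_add_le _ _
      _ ≤ τ + a := by rw [hτw]; linarith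
  have hyne : y ≠ 0 := by
    intro h
    rw [h, norm_zero] at hlow
    linarith
  have hyn0 : (0:ℝ) < ‖y‖ := norm_pos_iff.mpr hyne
  have hdiff : |τ - ‖y‖| ≤ a := by
    have h1 := abs_norm_sub_norm_le (τ • w) y
    rw [hτw, norm_sub_rev] at h1
    exact le_trans h1 ha
  have hkey : ‖y - ‖y‖ • w‖ ≤ 2*a := by
    have : y - ‖y‖ • w = (y - τ • w) + (τ - ‖y‖) • w := by
      rw [sub_smul]; abel
    rw [this]
    refine le_trans (norm_add_le _ _) ?_
    rw [norm_smul, hw, mul_one, Real.norm_eq_abs]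
    linarith
  refine ⟨hyne, hlow, hupp, ?_⟩
  have heq : ‖y‖⁻¹ • y - w = ‖y‖⁻¹ • (y - ‖y‖ • w) := by
    rw [smul_sub, smul_smul, inv_mul_cancel₀ hyn0.ne', one_smul]
  rw [heq, norm_smul, norm_inv, norm_norm]
  rw [div_eq_inv_mul]
  have h1 : ‖y‖⁻¹ ≤ (τ - a)⁻¹ := by
    apply inv_anti₀ (by linarith) hlow
  have h2 : (0:ℝ) ≤ ‖y - ‖y‖ • w‖ := norm_nonneg _
  calc ‖y‖⁻¹ * ‖y - ‖y‖ • w‖ ≤ (τ - a)⁻¹ * (2*a) := by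
        apply mul_le_mul h1 hkey h2 (inv_nonneg.mpr (by linarith))
    _ = (τ - a)⁻¹ * (2*a) := rfl

/-- directions with uniform one-sided difference bound -/
def DSet (f : X → Y) (x : X) (K ρ : ℝ) : Set ↥S :=
  {v | ∀ t : ℝ, 0 < t → t < ρ → ‖f (x + t • (v:X)) - f x‖ ≤ K * t}

lemma rat_extend {g : ℝ → ℝ} {c L : ℝ}
    (hg : ∀ σ ∈ Ioo (0:ℝ) L, ContinuousAt g σ)
    (h : ∀ q : ℚ, (q:ℝ) ∈ Ioo (0:ℝ) L → c ≤ g q) :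
    ∀ σ ∈ Ioo (0:ℝ) L, c ≤ g σ := by
  intro σ hσ
  by_contra hlt
  push_neg at hlt
  have hnb : {z | g z < c} ∈ 𝓝 σ := (hg σ hσ).preimage_mem_nhds (Iio_mem_nhds hlt)
  obtain ⟨δ, hδ0, hδ⟩ := Metric.mem_nhds_iff.mp hnb
  have hl : max (σ - δ/2) (σ/2) < σ := by
    apply max_lt <;> [linarith; linarith [hσ.1]]
  obtain ⟨q, hq1, hq2⟩ := exists_rat_btwn hl
  have hq0 : (0:ℝ) < q := lt_trans (by linarith [hσ.1, le_max_right (σ - δ/2) (σ/2)]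
    : (0:ℝ) < max (σ - δ/2) (σ/2)) hq1
  have hqL : (q:ℝ) < L := lt_trans hq2 hσ.2
  have hqball : (q:ℝ) ∈ Metric.ball σ δ := by
    rw [Metric.mem_ball, Real.dist_eq, abs_lt]
    constructor
    · have := le_max_left (σ - δ/2) (σ/2); nlinarith [hq1]
    · linarith
  have := hδ hqball
  simp only [mem_setOf_eq] at this
  exact absurd (h q ⟨hq0, hqL⟩) (not_le.mpr this)

lemma line_contAt {G : Set X} (hG : IsOpen G) {f : X → Y}
    (hline : ∀ a v : X, v ≠ 0 →
      ContinuousOn (fun t : ℝ => f (a + t • v)) {t : ℝ | a + t • v ∈ G})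
    {a v : X} (hv : v ≠ 0) {σ : ℝ} (hσ : a + σ • v ∈ G) :
    ContinuousAt (fun t : ℝ => f (a + t • v)) σ := by
  have hopen : IsOpen {t : ℝ | a + t • v ∈ G} :=
    hG.preimage (continuous_const.add (continuous_id.smul continuous_const))
  exact (hline a v hv).continuousAt (hopen.mem_nhds hσ)

lemma norm_contAt {f : X → Y} {a v : X} {σ : ℝ} (c : Y)
    (h : ContinuousAt (fun t : ℝ => f (a + t • v)) σ) :
    ContinuousAt (fun t : ℝ => ‖f (a + t • v) - c‖) σ :=
  (continuous_norm.continuousAt).comp (h.sub continuousAt_const)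

lemma smul_unit_mem_ball {x : X} {ρ : ℝ} (v : ↥S) {t : ℝ} (ht : 0 < t) (htρ : t < ρ) :
    x + t • (v:X) ∈ ball x ρ := by
  rw [Metric.mem_ball, dist_eq_norm, add_sub_cancel_left, norm_smul,
    norm_eq_of_mem_sphere v, mul_one, Real.norm_eq_abs, abs_of_pos ht]
  exact htρ

lemma dset_meas {G : Set X} (hG : IsOpen G) {f : X → Y} (hmeas : Measurable f)
    (hline : ∀ a v : X, v ≠ 0 →
      ContinuousOn (fun t : ℝ => f (a + t • v)) {t : ℝ | a + t • v ∈ G})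
    {x : X} {K ρ : ℝ} (hball : ball x ρ ⊆ G) :
    MeasurableSet (DSet f x K ρ) := by
  have hcoe : ∀ v : ↥S, (v:X) ≠ 0 := by
    intro v h
    have := norm_eq_of_mem_sphere v
    rw [h, norm_zero] at this; norm_num at this
  have heq : DSet f x K ρ =
      ⋂ (q : ℚ), {v : ↥S | (q:ℝ) ∈ Ioo (0:ℝ) ρ → ‖f (x + (q:ℝ) • (v:X)) - f x‖ ≤ K * q} := by
    apply Subset.antisymm
    · intro v hv
      rw [mem_iInter]
      intro q hq
      exact hv q hq.1 hq.2
    · intro v hv t ht htρ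
      rw [mem_iInter] at hv
      have := rat_extend (g := fun σ => K * σ - ‖f (x + σ • (v:X)) - f x‖) (c := 0) (L := ρ)
        (fun σ hσ => ((continuousAt_const.mul continuousAt_id).sub
          (norm_contAt (f x) (line_contAt hG hline (hcoe v)
            (hball (smul_unit_mem_ball v hσ.1 hσ.2))))))
        (fun q hq => by
          have h2 := hv q hq
          show (0:ℝ) ≤ K * (q:ℝ) - ‖f (x + (q:ℝ) • (v:X)) - f x‖
          linarith)
        t ⟨ht, htρ⟩
      linarith
  rw [heq]
  apply MeasurableSet.iInter
  intro q
  by_cases hq : (q:ℝ) ∈ Ioo (0:ℝ) ρ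
  · have : {v : ↥S | (q:ℝ) ∈ Ioo (0:ℝ) ρ → ‖f (x + (q:ℝ) • (v:X)) - f x‖ ≤ K * q}
        = {v : ↥S | ‖f (x + (q:ℝ) • (v:X)) - f x‖ ≤ K * q} := by
      ext v; simp [hq]
    rw [this]
    have hc : Continuous (fun v : ↥S => x + (q:ℝ) • (v:X)) :=
      continuous_const.add (continuous_subtype_val.const_smul _)
    have hm : Measurable (fun v : ↥S => ‖f (x + (q:ℝ) • (v:X)) - f x‖) :=
      (continuous_norm.measurable).comp
        (((hmeas.comp hc.measurable)).sub_const (f x))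
    exact hm measurableSet_Iic
  · have : {v : ↥S | (q:ℝ) ∈ Ioo (0:ℝ) ρ → ‖f (x + (q:ℝ) • (v:X)) - f x‖ ≤ K * q} = univ := by
      ext v; simp [hq]
    rw [this]
    exact MeasurableSet.univ

lemma spider {G : Set X} (hG : IsOpen G) {f : X → Y} (hmeas : Measurable f)
    (hline : ∀ a v : X, v ≠ 0 →
      ContinuousOn (fun t : ℝ => f (a + t • v)) {t : ℝ | a + t • v ∈ G})
    {x b : X} {ρ' J : ℝ} (hρ' : 0 < ρ')
    (hball : ball b ρ' ⊆ G) (hJ : J = ‖f b - f x‖) (hJ0 : 0 < J) (hS : Nonempty ↥S) :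
    ∃ L : ℝ, 0 < L ∧ L < ρ' ∧ ∃ W : Set ↥S, IsOpen W ∧ W.Nonempty ∧
      IsMeagre (W \ {v : ↥S | ∀ σ ∈ Ioo (0:ℝ) L, J/2 ≤ ‖f (b + σ • (v:X)) - f x‖}) := by
  haveI : CompleteSpace ↥S := (isClosed_sphere).completeSpace_coe
  haveI : BaireSpace ↥S := by infer_instance
  have hcoe : ∀ v : ↥S, (v:X) ≠ 0 := by
    intro v h
    have := norm_eq_of_mem_sphere v
    rw [h, norm_zero] at this; norm_num at this
  set V : ℝ → Set ↥S := fun L => {v : ↥S | ∀ σ ∈ Ioo (0:ℝ) L, J/2 ≤ ‖f (b + σ • (v:X)) - f x‖}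
    with hVdef
  -- covering
  have hcover : ∀ v : ↥S, ∃ p : ℚ, 0 < (p:ℝ) ∧ (p:ℝ) < ρ' ∧ v ∈ V p := by
    intro v
    have hbG : b ∈ G := hball (mem_ball_self hρ')
    have hc : ContinuousAt (fun σ : ℝ => ‖f (b + σ • (v:X)) - f x‖) 0 := by
      apply norm_contAt
      apply line_contAt hG hline (hcoe v)
      simpa using hbG
    have hval : ‖f (b + (0:ℝ) • (v:X)) - f x‖ = J := by simp [hJ]
    have hnb : {σ : ℝ | J/2 < ‖f (b + σ • (v:X)) - f x‖} ∈ 𝓝 (0:ℝ) := by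
      apply hc.preimage_mem_nhds
      apply Ioi_mem_nhds
      rw [hval]; linarith
    obtain ⟨δ, hδ0, hδ⟩ := Metric.mem_nhds_iff.mp hnb
    obtain ⟨p, hp1, hp2⟩ := exists_rat_btwn (show (0:ℝ) < min δ ρ' by positivity)
    refine ⟨p, hp1, lt_of_lt_of_le hp2 (min_le_right _ _), ?_⟩
    intro σ hσ
    have hmem : σ ∈ Metric.ball (0:ℝ) δ := by
      rw [Metric.mem_ball, Real.dist_eq, sub_zero, abs_of_pos hσ.1]
      exact lt_of_lt_of_le (lt_trans hσ.2 hp2) (min_le_left _ _)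
    exact le_of_lt (hδ hmem)
  -- some V p is nonmeagre
  have hnm : ∃ p : ℚ, (0 < (p:ℝ) ∧ (p:ℝ) < ρ') ∧ ¬ IsMeagre (V p) := by
    by_contra hall
    push_neg at hall
    have : IsMeagre (univ : Set ↥S) := by
      have hsub : (univ : Set ↥S) ⊆ ⋃ p : ℚ,
          (if 0 < (p:ℝ) ∧ (p:ℝ) < ρ' then V p else ∅) := by
        intro v _
        obtain ⟨p, h1, h2, h3⟩ := hcover v
        exact mem_iUnion.mpr ⟨p, by rw [if_pos ⟨h1, h2⟩]; exact h3⟩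
      refine IsMeagre.mono hsub (myMeagre_iUnion ?_)
      intro p
      by_cases hp : 0 < (p:ℝ) ∧ (p:ℝ) < ρ'
      · rw [if_pos hp]; exact hall p hp
      · rw [if_neg hp]; exact IsMeagre.empty
    exact nonmeager_univ this
  obtain ⟨p, ⟨hp0, hpρ⟩, hpV⟩ := hnm
  -- V p is measurable
  have hmeasV : MeasurableSet (V p) := by
    have heq : V p = ⋂ (r : ℚ), {v : ↥S |
        (r:ℝ) ∈ Ioo (0:ℝ) (p:ℝ) → J/2 ≤ ‖f (b + (r:ℝ) • (v:X)) - f x‖} := by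
      apply Subset.antisymm
      · intro v hv
        rw [mem_iInter]
        exact fun r hr => hv r hr
      · intro v hv σ hσ
        rw [mem_iInter] at hv
        exact rat_extend (g := fun σ => ‖f (b + σ • (v:X)) - f x‖) (c := J/2) (L := (p:ℝ))
          (fun σ' hσ' => norm_contAt (f x) (line_contAt hG hline (hcoe v)
            (hball (smul_unit_mem_ball v hσ'.1 (lt_trans hσ'.2 hpρ)))))
          (fun r hr => hv r hr) σ hσ
    rw [heq]
    apply MeasurableSet.iInter
    intro r
    by_cases hr : (r:ℝ) ∈ Ioo (0:ℝ) (p:ℝ)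
    · have h2 : {v : ↥S | (r:ℝ) ∈ Ioo (0:ℝ) (p:ℝ) → J/2 ≤ ‖f (b + (r:ℝ) • (v:X)) - f x‖}
          = {v : ↥S | J/2 ≤ ‖f (b + (r:ℝ) • (v:X)) - f x‖} := by
        ext v; simp [hr]
      rw [h2]
      have hc : Continuous (fun v : ↥S => b + (r:ℝ) • (v:X)) :=
        continuous_const.add (continuous_subtype_val.const_smul _)
      have hm : Measurable (fun v : ↥S => ‖f (b + (r:ℝ) • (v:X)) - f x‖) :=
        (continuous_norm.measurable).comp (((hmeas.comp hc.measurable)).sub_const (f x))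
      exact hm measurableSet_Ici
    · have h2 : {v : ↥S | (r:ℝ) ∈ Ioo (0:ℝ) (p:ℝ) → J/2 ≤ ‖f (b + (r:ℝ) • (v:X)) - f x‖}
          = univ := by
        ext v; simp [hr]
      rw [h2]
      exact MeasurableSet.univ
  obtain ⟨U, hUopen, hUne, hUmeag⟩ := nonmeager_loc hmeasV.baireMeasurableSet hpV
  exact ⟨p, hp0, hpρ, U, hUopen, hUne, hUmeag⟩

lemma claimA {f : X → Y} {K ρ q : ℝ} (hK : 1 ≤ K) (hρ : 0 < ρ) (hq : 0 < q) (hq1 : q ≤ 1)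
    (w : ↥S) {x u : X}
    (hDx : IsMeagre (Metric.ball w q \ DSet f x K ρ))
    (hDu : IsMeagre (Metric.ball w q \ DSet f u K ρ))
    (hdist : ‖u - x‖ ≤ ρ / (8/q + 2)) (hne : u ≠ x) :
    ‖f u - f x‖ ≤ K * (2*(8/q) + 3) * ‖u - x‖ := by
  set R : ℝ := 8/q with hRdef
  have hR8 : 8 ≤ R := by
    rw [hRdef, le_div_iff₀ hq]; nlinarith
  set t : ℝ := ‖u - x‖ with htdef
  have ht0 : 0 < t := by
    rw [htdef, norm_pos_iff, sub_ne_zero]; exact hne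
  set c₀ : X := u - x with hc₀def
  have hw1 : ‖(w:X)‖ = 1 := norm_eq_of_mem_sphere w
  -- witness
  have hest := dir_est (y := (R*t) • (w:X) - c₀) hw1 (τ := R*t) (a := t)
    (by rw [sub_sub_cancel_left, norm_neg]) (by nlinarith)
  obtain ⟨hyne, hylow, hyupp, hydir⟩ := hest
  set y : X := (R*t) • (w:X) - c₀ with hydef
  have hR1 : (0:ℝ) < R - 1 := by linarith
  have hdirq : ‖‖y‖⁻¹ • y - (w:X)‖ < q := by
    have h1 : 2*t/(R*t - t) = 2/(R-1) := by
      rw [show R*t - t = (R-1)*t by ring]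
      rw [div_eq_div_iff (by positivity : ((R-1)*t) ≠ 0) (by positivity : (R-1) ≠ 0)]
      ring
    have hqR : q * R = 8 := by rw [hRdef]; field_simp
    have h2 : 2/(R-1) ≤ q/2 := by
      rw [div_le_div_iff₀ hR1 (by norm_num : (0:ℝ) < 2)]
      nlinarith
    calc ‖‖y‖⁻¹ • y - (w:X)‖ ≤ 2*t/(R*t - t) := hydir
      _ = 2/(R-1) := h1
      _ ≤ q/2 := h2
      _ < q := by linarith
  set e₀ : ↥S := ⟨‖y‖⁻¹ • y, by
    rw [mem_sphere_zero_iff_norm, norm_smul, norm_inv, norm_norm]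
    exact inv_mul_cancel₀ (norm_ne_zero_iff.mpr hyne)⟩ with he₀def
  have he₀ball : e₀ ∈ Metric.ball w q := by
    rw [Metric.mem_ball, Subtype.dist_eq, dist_eq_norm]
    exact hdirq
  have heq₀ : (R*t) • (w:X) - c₀ = ‖y‖ • (e₀:X) := by
    show y = ‖y‖ • (‖y‖⁻¹ • y)
    rw [smul_smul, mul_inv_cancel₀ (norm_ne_zero_iff.mpr hyne), one_smul]
  have hwball : w ∈ Metric.ball w q := by
    rw [Metric.mem_ball, dist_self]; exact hq
  have hcore := core_meeting c₀ (Metric.isOpen_ball) (Metric.isOpen_ball) hDx hDu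
    (β₁ := (R+1)*t) (β₂ := (R+2)*t) w (R*t) hwball
    (Set.mem_Ioo.mpr ⟨by nlinarith, by nlinarith⟩)
    e₀ ‖y‖ he₀ball
    (Set.mem_Ioo.mpr ⟨lt_of_lt_of_le (by nlinarith) hylow,
      lt_of_le_of_lt hyupp (by nlinarith)⟩)
    heq₀
  obtain ⟨v, hv, s, hs, e, he, μ, hμ, heq⟩ := hcore
  -- z = x + s • v = u + μ • e
  have hzeq : x + s • (v:X) = u + μ • (e:X) := by
    have : s • (v:X) = c₀ + μ • (e:X) := by
      rw [← heq]; abel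
    rw [this, hc₀def]; abel
  have hRt2 : (R+2)*t ≤ ρ := by
    have h := hdist
    rw [le_div_iff₀ (by positivity : (0:ℝ) < 8/q + 2)] at h
    rw [hRdef]
    nlinarith
  have hsρ : s < ρ := by
    have h1 := hs.2
    nlinarith
  have hμρ : μ < ρ := lt_of_lt_of_le hμ.2 hRt2
  have hb1 := hv s hs.1 hsρ
  have hb2 := he μ hμ.1 hμρ
  rw [hzeq] at hb1
  have hsplit : f u - f x = (f (u + μ • (e:X)) - f x) - (f (u + μ • (e:X)) - f u) := by abel
  calc ‖f u - f x‖ ≤ ‖f (u + μ • (e:X)) - f x‖ + ‖f (u + μ • (e:X)) - f u‖ := by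
        rw [hsplit]; exact norm_sub_le _ _
    _ ≤ K * s + K * μ := add_le_add hb1 hb2
    _ ≤ K * (2*R + 3) * t := by nlinarith [hs.2, hμ.2, hs.1, hμ.1]
end Analytic

section ArithAux

lemma arith2 {q τ cn : ℝ} (hq : 0 < q) (hq1 : q ≤ 1) (hτ : 0 < τ)
    (hlow : τ - (3*q/16)*τ ≤ cn) : 2*((3*q/16)*τ)/(τ - (3*q/16)*τ) ≤ 6*q/13 := by
  have hpos : 0 < τ - (3*q/16)*τ := by nlinarith
  rw [div_le_div_iff₀ hpos (by norm_num : (0:ℝ) < 13)]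
  nlinarith [mul_nonneg (mul_nonneg (le_of_lt hq) (le_of_lt hτ)) (sub_nonneg.mpr hq1)]

lemma arith1 {q cn σ₀ : ℝ} (hq : 0 < q) (hq1 : q ≤ 1) (hc : 0 < cn)
    (h : σ₀ ≤ cn*q/16) (hσ : 0 < σ₀) : 2*σ₀/(cn - σ₀) ≤ 2*q/15 := by
  have hσc : σ₀ < cn := by nlinarith
  rw [div_le_div_iff₀ (by linarith) (by norm_num : (0:ℝ) < 15)]
  nlinarith [mul_le_mul_of_nonneg_left h (le_of_lt hq),
    mul_nonneg (mul_nonneg (le_of_lt hq) (le_of_lt hc)) (sub_nonneg.mpr hq1)]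

lemma arith3 {q : ℝ} (hq : 0 < q) : 2*q/15 + 6*q/13 < q := by
  have h : 2*q/15 + 6*q/13 = q*(116/195) := by ring
  rw [h]
  nlinarith

end ArithAux

section Porosity
variable {X Y : Type*} [NormedAddCommGroup X] [NormedSpace ℝ X] [CompleteSpace X]
  [MeasurableSpace X] [BorelSpace X]
  [NormedAddCommGroup Y] [NormedSpace ℝ Y]
  [MeasurableSpace Y] [BorelSpace Y]

local notation "S" => sphere (0:X) 1

/-- the basic piece of the decomposition -/
def PieceSet (f : X → Y) (G : Set X) (K ρ q : ℝ) (w : ↥S) : Set X :=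
  {x : X | closedBall x (2*ρ) ⊆ G ∧ IsMeagre (Metric.ball w q \ DSet f x K ρ)}

lemma not_lipschitzAtPt {f : X → Y} {x : X} (h : ¬ LipschitzAtPt f x) :
    ∀ C > (0:ℝ), ∀ δ > (0:ℝ), ∃ y ∈ ball x δ, C * ‖y - x‖ < ‖f y - f x‖ := by
  intro C hC δ hδ
  by_contra hcon
  push_neg at hcon
  exact h ⟨C, hC, δ, hδ, fun y hy => hcon y hy⟩

lemma piece_hole {G : Set X} (hG : IsOpen G) {f : X → Y} (hmeas : Measurable f)
    (hline : ∀ a v : X, v ≠ 0 →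
      ContinuousOn (fun t : ℝ => f (a + t • v)) {t : ℝ | a + t • v ∈ G})
    {K ρ q : ℝ} (hK : 1 ≤ K) (hρ : 0 < ρ) (hq : 0 < q) (hq1 : q ≤ 1)
    (w : ↥S) {x : X} (hx : x ∈ PieceSet f G K ρ q w) (hnl : ¬ LipschitzAtPt f x)
    {ε : ℝ} (hε : 0 < ε) :
    ∃ τ : ℝ, 0 < τ ∧ τ < ε ∧
      ball (x + τ • (-(w:X))) ((q/8)*τ) ∩ PieceSet f G K ρ q w = ∅ := by
  obtain ⟨hxball, hxD⟩ := hx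
  have hw1 : ‖(w:X)‖ = 1 := norm_eq_of_mem_sphere w
  set R : ℝ := 8/q with hRdef
  have hR8 : 8 ≤ R := by rw [hRdef, le_div_iff₀ hq]; nlinarith
  have hqR : q * R = 8 := by rw [hRdef]; field_simp
  set cstar : ℝ := K * (2*R + 3) with hcstardef
  have hcstar : 0 < cstar := by rw [hcstardef]; nlinarith
  set E : ℝ := cstar + 2*K with hEdef
  have hE : 0 < E := by rw [hEdef]; nlinarith
  set M : ℝ := 16/q with hMdef
  have hM : 0 < M := by positivity
  have hqM : q * M = 16 := by rw [hMdef]; field_simp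
  set Kbig : ℝ := 8*E*M with hKbigdef
  have hKbig : 0 < Kbig := by positivity
  set δ : ℝ := min (ρ/(4*(R+2)*M)) (min (ε/(2*M)) ρ) with hδdef
  have hδ0 : 0 < δ := by
    apply lt_min (by positivity) (lt_min (by positivity) hρ)
  obtain ⟨b, hbball, hbbig⟩ := not_lipschitzAtPt hnl Kbig hKbig δ hδ0
  have hbx : b ≠ x := by
    intro h
    subst h
    rw [sub_self, norm_zero, mul_zero, sub_self, norm_zero] at hbbig
    exact lt_irrefl 0 hbbig
  set t : ℝ := ‖b - x‖ with htdef
  set J : ℝ := ‖f b - f x‖ with hJdef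
  have ht0 : 0 < t := by
    rw [htdef, norm_pos_iff, sub_ne_zero]; exact hbx
  have hJbig : Kbig * t < J := hbbig
  have hJ0 : 0 < J := lt_of_le_of_lt (by positivity) hJbig
  have htδ : t < δ := by
    rw [htdef, ← dist_eq_norm]
    exact mem_ball.mp hbball
  -- spider at b
  have hbG2 : ball b (ρ/2) ⊆ G := by
    intro z hz
    apply hxball
    rw [mem_closedBall, dist_eq_norm]
    have h1 : ‖z - b‖ < ρ/2 := by rw [← dist_eq_norm]; exact mem_ball.mp hz
    have h2 : ‖b - x‖ < δ := htδ
    have h3 : δ ≤ ρ := le_trans (min_le_right _ _) (min_le_right _ _)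
    calc ‖z - x‖ ≤ ‖z - b‖ + ‖b - x‖ := norm_sub_le_norm_sub_add_norm_sub z b x
      _ ≤ 2 * ρ := by linarith
  obtain ⟨L, hL0, hLρ, W, hWopen, hWne, hWmeag⟩ :=
    spider hG hmeas hline (by positivity : (0:ℝ) < ρ/2) hbG2 hJdef hJ0 ⟨w⟩
  set V : Set ↥S := {v : ↥S | ∀ σ ∈ Ioo (0:ℝ) L, J/2 ≤ ‖f (b + σ • (v:X)) - f x‖} with hVdef
  -- choose the hole scale
  set τ : ℝ := min (J/(8*E)) (min (ρ/(4*(R+2))) (ε/2)) with hτdef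
  have hτ0 : 0 < τ := by
    apply lt_min (by positivity) (lt_min (by positivity) (by positivity))
  have hτε : τ < ε := by
    calc τ ≤ min (ρ/(4*(R+2))) (ε/2) := min_le_right _ _
      _ ≤ ε/2 := min_le_right _ _
      _ < ε := by linarith
  have hτρ : 4*τ ≤ ρ/(R+2) := by
    have h1 : τ ≤ ρ/(4*(R+2)) := le_trans (min_le_right _ _) (min_le_left _ _)
    have hR2 : (0:ℝ) < R + 2 := by linarith
    have h4R : (0:ℝ) < 4*(R+2) := by linarith
    have h2 : 4*(ρ/(4*(R+2))) = ρ/(R+2) := by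
      rw [← mul_div_assoc, div_eq_div_iff (ne_of_gt h4R) (ne_of_gt hR2)]
      ring
    linarith
  have hτJ : τ ≤ J/(8*E) := min_le_left _ _
  have hMtτ : M * t < τ := by
    apply lt_min
    · rw [lt_div_iff₀ (by positivity : (0:ℝ) < 8*E)]
      calc M * t * (8*E) = Kbig * t := by rw [hKbigdef]; ring
        _ < J := hJbig
    · apply lt_min
      · have h1 : t < ρ/(4*(R+2)*M) := lt_of_lt_of_le htδ (min_le_left _ _)
        calc M * t < M * (ρ/(4*(R+2)*M)) := by
              exact mul_lt_mul_of_pos_left h1 hM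
          _ = ρ/(4*(R+2)) := by field_simp
      · have h1 : t < ε/(2*M) := lt_of_lt_of_le htδ (le_trans (min_le_right _ _) (min_le_left _ _))
        calc M * t < M * (ε/(2*M)) := mul_lt_mul_of_pos_left h1 hM
          _ = ε/2 := by field_simp
  refine ⟨τ, hτ0, hτε, ?_⟩
  -- show hole
  rw [eq_empty_iff_forall_notMem]
  rintro u ⟨huball, huP⟩
  obtain ⟨huballG, huD⟩ := huP
  rw [mem_ball, dist_eq_norm] at huball
  have hucenter : ‖u - (x - τ • (w:X))‖ < (q/8)*τ := by
    have : x + τ • (-(w:X)) = x - τ • (w:X) := by rw [smul_neg]; abel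
    rwa [this] at huball
  have hune : u ≠ x := by
    intro hux
    subst hux
    rw [sub_sub_cancel, norm_smul, hw1, mul_one, Real.norm_eq_abs, abs_of_pos hτ0] at hucenter
    nlinarith
  have hut : ‖u - x‖ ≤ 2*τ := by
    have h1 : ‖u - x‖ ≤ ‖u - (x - τ • (w:X))‖ + ‖τ • (w:X)‖ := by
      have hdd : (u - (x - τ • (w:X))) + (-(τ • (w:X))) = u - x := by abel
      calc ‖u - x‖ = ‖(u - (x - τ • (w:X))) + (-(τ • (w:X)))‖ := by rw [hdd]
        _ ≤ ‖u - (x - τ • (w:X))‖ + ‖-(τ • (w:X))‖ := norm_add_le _ _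
        _ = ‖u - (x - τ • (w:X))‖ + ‖τ • (w:X)‖ := by rw [norm_neg]
    have h2 : ‖τ • (w:X)‖ = τ := by
      rw [norm_smul, hw1, mul_one, Real.norm_eq_abs, abs_of_pos hτ0]
    nlinarith
  -- claimA
  have hfufx : ‖f u - f x‖ ≤ cstar * ‖u - x‖ := by
    rw [hcstardef, hRdef]
    apply claimA hK hρ hq hq1 w hxD huD ?_ hune
    rw [← hRdef]
    calc ‖u - x‖ ≤ 2*τ := hut
      _ ≤ ρ/(R+2) := by linarith [hτρ, hτ0]
  have hfufx2 : ‖f u - f x‖ ≤ cstar * (2*τ) := by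
    refine le_trans hfufx ?_
    exact mul_le_mul_of_nonneg_left hut (le_of_lt hcstar)
  -- geometry of c = b - u
  set c : X := b - u with hcdef
  have hcw : ‖c - τ • (w:X)‖ ≤ (3*q/16)*τ := by
    have hdd : c - τ • (w:X) = (b - x) - (u - (x - τ • (w:X))) := by rw [hcdef]; abel
    have htM : t ≤ (q/16)*τ := by
      have h1 := mul_lt_mul_of_pos_left hMtτ hq
      rw [← mul_assoc, hqM] at h1
      nlinarith
    calc ‖c - τ • (w:X)‖ = ‖(b - x) - (u - (x - τ • (w:X)))‖ := by rw [hdd]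
      _ ≤ ‖b - x‖ + ‖u - (x - τ • (w:X))‖ := norm_sub_le _ _
      _ ≤ (q/16)*τ + (q/8)*τ := add_le_add htM (le_of_lt hucenter)
      _ = (3*q/16)*τ := by ring
  have haτ : (3*q/16)*τ < τ := by
    have h1 : (3*q/16)*τ ≤ (3/16)*τ := mul_le_mul_of_nonneg_right (by linarith) (le_of_lt hτ0)
    linarith
  have hcest := dir_est hw1 hcw haτ
  obtain ⟨hcne, hclow, hcupp, hcdir⟩ := hcest
  have hΔpos : 0 < ‖c‖ := norm_pos_iff.mpr hcne
  have hq316 : (3*q/16)*τ ≤ (3/16)*τ := mul_le_mul_of_nonneg_right (by linarith) (le_of_lt hτ0)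
  have hq316' : (0:ℝ) ≤ (3*q/16)*τ := by positivity
  have hΔlow : τ/2 ≤ ‖c‖ := by linarith
  have hΔupp : ‖c‖ ≤ 2*τ := by linarith
  have hcdir613 : ‖‖c‖⁻¹ • c - (w:X)‖ ≤ 6*q/13 :=
    le_trans hcdir (arith2 hq hq1 hτ0 hclow)
  -- meeting witness
  obtain ⟨vh, hvh⟩ := hWne
  set σ₀ : ℝ := min (L/2) (‖c‖*q/16) with hσ₀def
  have hσ₀pos : 0 < σ₀ := lt_min (by linarith) (by positivity)
  have hσ₀L : σ₀ < L := lt_of_le_of_lt (min_le_left _ _) (by linarith)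
  have hσ₀Δ : σ₀ ≤ ‖c‖*q/16 := min_le_right _ _
  have hσ₀Δ' : σ₀ < ‖c‖ := by
    have h1 : ‖c‖*q ≤ ‖c‖*1 := mul_le_mul_of_nonneg_left hq1 (le_of_lt hΔpos)
    linarith
  set y' : X := σ₀ • (vh:X) + c with hy'def
  have hw'1 : ‖‖c‖⁻¹ • c‖ = 1 := by
    rw [norm_smul, norm_inv, norm_norm]
    exact inv_mul_cancel₀ (ne_of_gt hΔpos)
  have hy'w : ‖y' - ‖c‖ • (‖c‖⁻¹ • c)‖ ≤ σ₀ := by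
    rw [smul_smul, mul_inv_cancel₀ (ne_of_gt hΔpos), one_smul]
    rw [hy'def, add_sub_cancel_right, norm_smul, norm_eq_of_mem_sphere vh, mul_one,
      Real.norm_eq_abs, abs_of_pos hσ₀pos]
  have hy'est := dir_est hw'1 hy'w hσ₀Δ'
  obtain ⟨hy'ne, hy'low, hy'upp, hy'dir⟩ := hy'est
  have hy'dir215 : ‖‖y'‖⁻¹ • y' - ‖c‖⁻¹ • c‖ ≤ 2*q/15 :=
    le_trans hy'dir (arith1 hq hq1 hΔpos hσ₀Δ hσ₀pos)
  set e₀ : ↥S := ⟨‖y'‖⁻¹ • y', by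
    rw [mem_sphere_zero_iff_norm, norm_smul, norm_inv, norm_norm]
    exact inv_mul_cancel₀ (norm_ne_zero_iff.mpr hy'ne)⟩ with he₀def
  have he₀ball : e₀ ∈ Metric.ball w q := by
    rw [Metric.mem_ball, Subtype.dist_eq, dist_eq_norm]
    have hchain : ‖(‖y'‖⁻¹ • y') - (w:X)‖ ≤
        ‖(‖y'‖⁻¹ • y') - (‖c‖⁻¹ • c)‖ + ‖(‖c‖⁻¹ • c) - (w:X)‖ :=
      norm_sub_le_norm_sub_add_norm_sub _ _ _
    show ‖(‖y'‖⁻¹ • y') - (w:X)‖ < q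
    have harith := arith3 hq
    linarith [le_trans hchain (add_le_add hy'dir215 hcdir613)]
  have hμ₀Ioo : ‖y'‖ ∈ Ioo (0:ℝ) (4*τ) := by
    constructor
    · exact norm_pos_iff.mpr hy'ne
    · have e1 : ‖c‖*q ≤ ‖c‖ := mul_le_of_le_one_right (le_of_lt hΔpos) hq1
      have h2 : ‖y'‖ ≤ ‖c‖ + σ₀ := hy'upp
      linarith
  have heq₀ : σ₀ • (vh:X) - (u - b) = ‖y'‖ • (e₀:X) := by
    have h1 : σ₀ • (vh:X) - (u - b) = y' := by rw [hy'def, hcdef]; abel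
    rw [h1, he₀def]
    show y' = ‖y'‖ • (‖y'‖⁻¹ • y')
    rw [smul_smul, mul_inv_cancel₀ (norm_ne_zero_iff.mpr hy'ne), one_smul]
  have hcore := core_meeting (u - b) hWopen (Metric.isOpen_ball) hWmeag huD
    (β₁ := L) (β₂ := 4*τ) vh σ₀ hvh (Set.mem_Ioo.mpr ⟨hσ₀pos, hσ₀L⟩)
    e₀ ‖y'‖ he₀ball hμ₀Ioo heq₀
  obtain ⟨v, hvV, σ, hσ, e, heD, μ, hμ, heq⟩ := hcore
  -- the meeting point
  have hzeq : b + σ • (v:X) = u + μ • (e:X) := by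
    have h1 : σ • (v:X) = (u - b) + μ • (e:X) := by rw [← heq]; abel
    rw [h1]; abel
  have hρR2 : ρ/(R+2) ≤ ρ := by
    apply div_le_self (le_of_lt hρ)
    linarith
  have hμρ : μ < ρ := by
    have := hμ.2
    linarith [hτρ, hρR2]
  have hbound1 : J/2 ≤ ‖f (b + σ • (v:X)) - f x‖ := hvV σ (Set.mem_Ioo.mpr ⟨hσ.1, hσ.2⟩)
  have hbound2 : ‖f (u + μ • (e:X)) - f u‖ ≤ K * μ := heD μ hμ.1 hμρ
  rw [hzeq] at hbound1
  have hsplit : f (u + μ • (e:X)) - f x = (f (u + μ • (e:X)) - f u) + (f u - f x) := by abel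
  have hchain : ‖f (u + μ • (e:X)) - f x‖ ≤ K * μ + cstar * (2*τ) := by
    calc ‖f (u + μ • (e:X)) - f x‖
        ≤ ‖f (u + μ • (e:X)) - f u‖ + ‖f u - f x‖ := by rw [hsplit]; exact norm_add_le _ _
      _ ≤ K * μ + cstar * (2*τ) := add_le_add hbound2 hfufx2
  have hfinal : J/2 ≤ 2*E*τ := by
    have h1 : K * μ ≤ K * (4*τ) := mul_le_mul_of_nonneg_left (le_of_lt hμ.2) (by linarith)
    have h2 : K * (4*τ) + cstar * (2*τ) = 2*E*τ := by rw [hEdef]; ring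
    linarith
  have hcontra : 2*E*τ ≤ J/4 := by
    have h2 := mul_le_mul_of_nonneg_left hτJ (by positivity : (0:ℝ) ≤ 2*E)
    have h3 : 2*E*(J/(8*E)) = J/4 := by
      field_simp
      ring
    linarith
  linarith
end Porosity

section Covering
variable {X Y : Type*} [NormedAddCommGroup X] [NormedSpace ℝ X] [CompleteSpace X]
  [MeasurableSpace X] [BorelSpace X]
  [NormedAddCommGroup Y] [NormedSpace ℝ Y]
  [MeasurableSpace Y] [BorelSpace Y]

local notation "S" => sphere (0:X) 1

lemma covering {G : Set X} (hG : IsOpen G) {f : X → Y} (hmeas : Measurable f)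
    (hline : ∀ a v : X, v ≠ 0 →
      ContinuousOn (fun t : ℝ => f (a + t • v)) {t : ℝ | a + t • v ∈ G})
    (d : ℕ → ↥S) (hd : DenseRange d)
    {x : X} (hxG : x ∈ G)
    {B : Set X} (hB : B ⊆ sphere (0:X) 1) (hBnm : ¬ IsMeagre {v : ↥S | (v:X) ∈ B})
    (hBbound : ∀ v ∈ B, ∃ K : ℝ, ∃ r > (0:ℝ), ∀ t : ℝ, 0 < t → t < r →
      ‖f (x + t • v) - f x‖ ≤ K * t) :
    ∃ n i k : ℕ, x ∈ PieceSet f G ((n:ℝ)+1) (1/((n:ℝ)+1)) (1/((k:ℝ)+1)) (d i) := by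
  -- find n₀ with closedBall x (2/(n₀+1)) ⊆ G
  obtain ⟨r, hr0, hrG⟩ := Metric.isOpen_iff.mp hG x hxG
  obtain ⟨n₀, hn₀⟩ := exists_nat_gt (2/r)
  have hn₀G : closedBall x (2/((n₀:ℝ)+1)) ⊆ G := by
    intro z hz
    apply hrG
    rw [mem_closedBall] at hz
    rw [mem_ball]
    have h1 : 2/((n₀:ℝ)+1) < r := by
      rw [div_lt_iff₀ (by positivity)]
      rw [div_lt_iff₀ hr0] at hn₀
      nlinarith
    linarith
  -- B' is covered by the DSets
  set B' : Set ↥S := {v : ↥S | (v:X) ∈ B} with hB'def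
  have hcov : B' ⊆ ⋃ j : ℕ, DSet f x ((((n₀+j):ℕ):ℝ)+1) (1/((((n₀+j):ℕ):ℝ)+1)) := by
    intro v hv
    obtain ⟨Kv, rv, hrv, hbound⟩ := hBbound (v:X) hv
    obtain ⟨j, hj⟩ := exists_nat_ge (max Kv (1/rv))
    refine mem_iUnion.mpr ⟨j, ?_⟩
    intro t ht htρ
    have hn1 : (j:ℝ) ≤ (((n₀+j):ℕ):ℝ) := by
      push_cast; linarith [Nat.cast_nonneg (α := ℝ) n₀]
    have hKv : Kv ≤ (((n₀+j):ℕ):ℝ)+1 := by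
      have := le_max_left Kv (1/rv); linarith
    have hrv2 : 1/((((n₀+j):ℕ):ℝ)+1) ≤ rv := by
      have h2 : 1/rv ≤ (((n₀+j):ℕ):ℝ)+1 := by
        have := le_max_right Kv (1/rv); linarith
      rw [div_le_iff₀ (by positivity)]
      rw [div_le_iff₀ hrv] at h2
      nlinarith
    have htrv : t < rv := lt_of_lt_of_le htρ hrv2
    calc ‖f (x + t • (v:X)) - f x‖ ≤ Kv * t := hbound t ht htrv
      _ ≤ ((((n₀+j):ℕ):ℝ)+1) * t := by nlinarith
  -- some DSet is non-meagre
  have hex : ∃ j : ℕ, ¬ IsMeagre (DSet f x ((((n₀+j):ℕ):ℝ)+1) (1/((((n₀+j):ℕ):ℝ)+1))) := by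
    by_contra hall
    push_neg at hall
    exact hBnm (IsMeagre.mono hcov (myMeagre_iUnion hall))
  obtain ⟨j, hj⟩ := hex
  set n : ℕ := n₀ + j with hndef
  have hballG : ball x (1/((n:ℝ)+1)) ⊆ G := by
    intro z hz
    apply hn₀G
    rw [mem_ball] at hz
    rw [mem_closedBall]
    have h1 : 1/((n:ℝ)+1) ≤ 2/((n₀:ℝ)+1) := by
      rw [div_le_div_iff₀ (by positivity) (by positivity)]
      have : ((n₀:ℝ)) ≤ ((n:ℕ):ℝ) := by rw [hndef]; push_cast; linarith [Nat.cast_nonneg (α := ℝ) j]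
      nlinarith
    linarith
  have hmeasD := dset_meas hG hmeas hline (x := x) (K := ((n:ℝ)+1)) hballG
  obtain ⟨U, hUopen, hUne, hUmeag⟩ := nonmeager_loc hmeasD.baireMeasurableSet hj
  -- find a small ball of the countable family inside U
  obtain ⟨u₀, hu₀U⟩ := hUne
  obtain ⟨rh, hrh0, hrhU⟩ := Metric.isOpen_iff.mp hUopen u₀ hu₀U
  obtain ⟨k, hk⟩ := exists_nat_gt (2/rh)
  have hkr : 2/((k:ℝ)+1) < rh := by
    rw [div_lt_iff₀ (by positivity)]
    rw [div_lt_iff₀ hrh0] at hk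
    nlinarith
  have hdball : (Metric.ball u₀ (1/(2*((k:ℝ)+1)))).Nonempty :=
    ⟨u₀, by rw [Metric.mem_ball, dist_self]; positivity⟩
  obtain ⟨i, hdi⟩ := hd.exists_mem_open Metric.isOpen_ball hdball
  refine ⟨n, i, k, ?_, ?_⟩
  · -- closedBall x (2 * (1/(n+1))) ⊆ G
    intro z hz
    apply hn₀G
    rw [mem_closedBall] at hz ⊢
    have h1 : 2*(1/((n:ℝ)+1)) ≤ 2/((n₀:ℝ)+1) := by
      rw [mul_one_div]
      rw [div_le_div_iff₀ (by positivity) (by positivity)]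
      have : ((n₀:ℝ)) ≤ ((n:ℕ):ℝ) := by rw [hndef]; push_cast; linarith [Nat.cast_nonneg (α := ℝ) j]
      nlinarith
    linarith
  · -- the cap is almost contained in the DSet
    refine IsMeagre.mono ?_ hUmeag
    intro z hz
    refine ⟨?_, hz.2⟩
    have hzball : z ∈ Metric.ball (d i) (1/((k:ℝ)+1)) := hz.1
    apply hrhU
    rw [Metric.mem_ball] at hzball hdi ⊢
    calc dist z u₀ ≤ dist z (d i) + dist (d i) u₀ := dist_triangle _ _ _
      _ < 1/((k:ℝ)+1) + 1/(2*((k:ℝ)+1)) := add_lt_add hzball hdi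
      _ ≤ 2/((k:ℝ)+1) := by
          rw [div_add_div _ _ (by positivity : ((k:ℝ)+1) ≠ 0) (by positivity : (2*((k:ℝ)+1)) ≠ 0)]
          rw [div_le_div_iff₀ (by positivity) (by positivity)]
          ring_nf
          nlinarith [Nat.cast_nonneg (α := ℝ) k]
      _ < rh := hkr
end Covering

theorem stmt13 {X Y : Type*} [NormedAddCommGroup X] [NormedSpace ℝ X] [CompleteSpace X]
    [TopologicalSpace.SeparableSpace X]
    [MeasurableSpace X] [BorelSpace X]
    [NormedAddCommGroup Y] [NormedSpace ℝ Y] [CompleteSpace Y]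
    [MeasurableSpace Y] [BorelSpace Y]
    (G : Set X) (hG : IsOpen G) (f : X → Y) (hmeas : Measurable f)
    (hline : ∀ a v : X, v ≠ 0 →
      ContinuousOn (fun t : ℝ => f (a + t • v)) {t : ℝ | a + t • v ∈ G}) :
    SigmaDirPorous {x ∈ G | ¬ LipschitzAtPt f x ∧
      ∃ B ⊆ sphere (0:X) 1,
        ¬ IsMeagre {v : sphere (0:X) 1 | (v : X) ∈ B} ∧
        ∀ v ∈ B, ∃ K : ℝ, ∃ r > (0:ℝ), ∀ t : ℝ, 0 < t → t < r →
          ‖f (x + t • v) - f x‖ ≤ K * t} := by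
  set A : Set X := {x ∈ G | ¬ LipschitzAtPt f x ∧
      ∃ B ⊆ sphere (0:X) 1,
        ¬ IsMeagre {v : sphere (0:X) 1 | (v : X) ∈ B} ∧
        ∀ v ∈ B, ∃ K : ℝ, ∃ r > (0:ℝ), ∀ t : ℝ, 0 < t → t < r →
          ‖f (x + t • v) - f x‖ ≤ K * t} with hAdef
  by_cases hS : Nonempty ↥(sphere (0:X) 1)
  · -- main case
    obtain ⟨d, hd⟩ : ∃ d : ℕ → ↥(sphere (0:X) 1), DenseRange d := by
      haveI := hS
      exact ⟨TopologicalSpace.denseSeq _, TopologicalSpace.denseRange_denseSeq _⟩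
    set F : ℕ × ℕ × ℕ → Set X := fun t =>
      PieceSet f G ((t.1:ℝ)+1) (1/((t.1:ℝ)+1)) (1/((t.2.2:ℝ)+1)) (d t.2.1) ∩ A with hFdef
    set e : ℕ × ℕ × ℕ ≃ ℕ := Denumerable.eqv (ℕ × ℕ × ℕ) with hedef
    refine ⟨fun N => F (e.symm N), ?_, ?_⟩
    · -- A = union
      apply Subset.antisymm
      · intro x hx
        obtain ⟨hxG, hnl, B, hB, hBnm, hBbound⟩ := hx
        obtain ⟨n, i, k, hpiece⟩ := covering hG hmeas hline d hd hxG hB hBnm hBbound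
        refine mem_iUnion.mpr ⟨e (n, i, k), ?_⟩
        rw [Equiv.symm_apply_apply]
        exact ⟨hpiece, ⟨hxG, hnl, B, hB, hBnm, hBbound⟩⟩
      · intro x hx
        obtain ⟨N, hN⟩ := mem_iUnion.mp hx
        exact hN.2
    · -- porosity
      intro N x hx
      obtain ⟨hpiece, hxA⟩ := hx
      obtain ⟨hxG, hnl, _⟩ := hxA
      set n : ℕ := (e.symm N).1
      set i : ℕ := (e.symm N).2.1
      set k : ℕ := (e.symm N).2.2
      set K : ℝ := (n:ℝ)+1
      set ρ : ℝ := 1/((n:ℝ)+1)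
      set q : ℝ := 1/((k:ℝ)+1)
      set w : ↥(sphere (0:X) 1) := d i
      have hK : 1 ≤ K := by
        have := Nat.cast_nonneg (α := ℝ) n
        show (1:ℝ) ≤ (n:ℝ)+1
        linarith
      have hρ : 0 < ρ := by positivity
      have hq : 0 < q := by positivity
      have hq1 : q ≤ 1 := by
        rw [div_le_one (by positivity)]
        linarith [Nat.cast_nonneg (α := ℝ) k]
      have H : ∀ m : ℕ, ∃ τ : ℝ, 0 < τ ∧ τ < 1/((m:ℝ)+1) ∧
          ball (x + τ • (-(w:X))) ((q/8)*τ) ∩ PieceSet f G K ρ q w = ∅ := by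
        intro m
        exact piece_hole hG hmeas hline hK hρ hq hq1 w hpiece hnl (by positivity)
      choose τ hτ0 hτlt hτhole using H
      refine ⟨-(w:X), ?_, q/8, by positivity, τ, hτ0, ?_, ?_⟩
      · intro h
        have := norm_eq_of_mem_sphere w
        rw [← norm_neg, h, norm_zero] at this
        norm_num at this
      · apply squeeze_zero (fun m => le_of_lt (hτ0 m)) (fun m => le_of_lt (hτlt m))
        exact tendsto_one_div_add_atTop_nhds_zero_nat
      · intro m
        rw [eq_empty_iff_forall_notMem]
        rintro z ⟨hz1, hz2⟩
        have : z ∈ ball (x + τ m • (-(w:X))) ((q/8)*(τ m)) ∩ PieceSet f G K ρ q w :=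
          ⟨hz1, hz2.1⟩
        rw [hτhole m] at this
        exact this
  · -- the sphere is empty: A is empty
    have hAempty : A = ∅ := by
      rw [eq_empty_iff_forall_notMem]
      rintro x ⟨hxG, hnl, B, hB, hBnm, hBbound⟩
      apply hBnm
      have : {v : ↥(sphere (0:X) 1) | (v:X) ∈ B} = ∅ := by
        rw [eq_empty_iff_forall_notMem]
        intro v
        exact absurd ⟨v⟩ hS
      rw [this]
      exact IsMeagre.empty
    refine ⟨fun _ => ∅, ?_, ?_⟩
    · rw [hAempty]; simp
    · intro n x hx
      exact absurd hx (notMem_empty x)
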